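/- Let U and V be finite nonempty sets of vectors in ℝ^n. Then the inequality max_{u∈U} ⟨u,x⟩ ≤ max_{v∈V} ⟨v,x⟩ holds for all x ∈ ℝ^n with nonnegative coordinates if and only if for every u ∈ U there exists a vector c in the convex hull of V with u ≤ c componentwise. -/

import Mathlib

open Pointwise

/-- `max_{u∈U} ⟨u,x⟩ ≤ max_{v∈V} ⟨v,x⟩` for all nonnegative `x` iff every `u ∈ U`
lies below some point of the convex hull of `V`. -/
theorem stmt9 (n : ℕ) (U V : Finset (Fin n → ℝ)) (hU : U.Nonempty) (hV : V.Nonempty) :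
    (∀ x : Fin n → ℝ, (∀ i, 0 ≤ x i) →
      U.sup' hU (fun u => ∑ i, u i * x i) ≤ V.sup' hV (fun v => ∑ i, v i * x i)) ↔
    ∀ u ∈ U, ∃ c ∈ convexHull ℝ (V : Set (Fin n → ℝ)), ∀ i, u i ≤ c i := by
  constructor
  · intro h u hu
    by_contra hc
    push_neg at hc
    -- S = convexHull V + nonpositive orthant
    set T : Set (Fin n → ℝ) := {d | ∀ i, d i ≤ 0} with hT
    set S : Set (Fin n → ℝ) := convexHull ℝ (V : Set (Fin n → ℝ)) + T with hS
    have hTclosed : IsClosed T := by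
      have : T = ⋂ i, {d : Fin n → ℝ | d i ≤ 0} := by
        ext d; simp [hT, Set.mem_iInter]
      rw [this]
      exact isClosed_iInter fun i =>
        isClosed_le (continuous_apply i) continuous_const
    have hKcompact : IsCompact (convexHull ℝ (V : Set (Fin n → ℝ))) :=
      V.finite_toSet.isCompact_convexHull ℝ
    have hSclosed : IsClosed S :=
      hTclosed.add_left_of_isCompact hKcompact
    have hTconvex : Convex ℝ T := by
      intro a ha b hb s t hs ht hst
      intro i
      have := add_nonpos (mul_nonpos_of_nonneg_of_nonpos hs (ha i))
        (mul_nonpos_of_nonneg_of_nonpos ht (hb i))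
      simpa using this
    have hSconvex : Convex ℝ S := (convex_convexHull ℝ _).add hTconvex
    have huS : u ∉ S := by
      rintro ⟨c, hcK, d, hd, rfl⟩
      obtain ⟨i, hi⟩ := hc c hcK
      exact absurd (by simpa using add_le_of_nonpos_right (a := c i) (hd i)) (not_le.mpr hi)
    obtain ⟨f, r, hfr, hru⟩ := geometric_hahn_banach_closed_point hSconvex hSclosed huS
    set x : Fin n → ℝ := fun i => f (Pi.single i 1) with hx
    have hf_eq : ∀ y : Fin n → ℝ, f y = ∑ i, y i * x i := by
      intro y
      have hy : y = ∑ i, y i • (Pi.single i 1 : Fin n → ℝ) := by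
        ext j; simp [Pi.single_apply]
      conv_lhs => rw [hy]
      simp [hx, mul_comm]
    -- V ⊆ S
    have hVS : ∀ v ∈ V, v ∈ S := by
      intro v hv
      exact ⟨v, subset_convexHull ℝ _ hv, 0, fun i => le_refl 0, by simp⟩
    -- pick some c0 ∈ convexHull V
    obtain ⟨v0, hv0⟩ := id hV
    have hc0 : (v0 : Fin n → ℝ) ∈ convexHull ℝ (V : Set (Fin n → ℝ)) :=
      subset_convexHull ℝ _ hv0
    -- x is nonnegative
    have hxnn : ∀ i, 0 ≤ x i := by
      intro i
      by_contra hxi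
      push_neg at hxi
      -- v0 - t • single i 1 ∈ S for all t ≥ 0, f value blows up
      set t : ℝ := (r - f v0 + 1) / (-(x i)) with ht'
      have hxpos : 0 < -(x i) := by linarith
      have ht0 : 0 ≤ t := by
        apply div_nonneg _ hxpos.le
        have : f v0 < r := hfr v0 (hVS v0 hv0)
        linarith
      have hmem : v0 + (-t) • (Pi.single i 1 : Fin n → ℝ) ∈ S := by
        refine ⟨v0, hc0, (-t) • (Pi.single i 1 : Fin n → ℝ), ?_, by simp⟩
        intro j
        simp only [Pi.smul_apply, Pi.single_apply, smul_eq_mul]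
        by_cases hji : j = i <;> simp [hji] <;> nlinarith
      have := hfr _ hmem
      rw [map_add, map_smul] at this
      have hfi : f ((Pi.single i 1 : Fin n → ℝ)) = x i := rfl
      rw [hfi] at this
      have ht : t * (-(x i)) = r - f v0 + 1 := by
        rw [ht', div_mul_cancel₀ _ hxpos.ne']
      simp only [smul_eq_mul] at this
      nlinarith
    -- apply the hypothesis
    have hmain := h x hxnn
    have hu_le : f u ≤ U.sup' hU (fun u => ∑ i, u i * x i) := by
      rw [hf_eq]
      exact Finset.le_sup' (fun u => ∑ i, u i * x i) hu
    have hsup_lt : V.sup' hV (fun v => ∑ i, v i * x i) < r := by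
      apply (Finset.sup'_lt_iff hV).mpr
      intro v hv
      rw [← hf_eq]
      exact hfr v (hVS v hv)
    linarith
  · intro h x hxnn
    apply Finset.sup'_le
    intro u hu
    obtain ⟨c, hcK, hc⟩ := h u hu
    have h1 : ∑ i, u i * x i ≤ ∑ i, c i * x i :=
      Finset.sum_le_sum fun i _ => mul_le_mul_of_nonneg_right (hc i) (hxnn i)
    have h2 : ∑ i, c i * x i ≤ V.sup' hV (fun v => ∑ i, v i * x i) := by
      set M := V.sup' hV (fun v => ∑ i, v i * x i) with hM
      have hsub : convexHull ℝ (V : Set (Fin n → ℝ)) ⊆ {y | ∑ i, y i * x i ≤ M} := by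
        apply convexHull_min
        · intro v hv
          exact Finset.le_sup' (fun v => ∑ i, v i * x i) hv
        · apply convex_halfSpace_le
          exact ⟨fun a b => by simp [add_mul, Finset.sum_add_distrib],
            fun s a => by simp [Finset.mul_sum, mul_assoc]⟩
      exact hsub hcK
    linarith
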